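/- Let α, R > 0 and let g : B(0,R) → ℝ be continuously differentiable with gradient s = ∇g satisfying ⟨s(y) − s(x), x − y⟩ ≥ α‖x − y‖² for all x, y ∈ B(0,R) (the closed Euclidean ball of radius R centered at 0 in ℝ^d). For each z ∈ B(0,R) define φ_z(x) = g(z) + ⟨s(z), x − z⟩ − (α/2)‖x − z‖² for x ∈ ℝ^d, and define g̃(x) = g(x) when ‖x‖ ≤ R and g̃(x) = inf_{z ∈ B(0,R)} φ_z(x) when ‖x‖ > R. Then g̃ is globally α-strongly concave on ℝ^d: the function x ↦ g̃(x) + (α/2)‖x‖² is concave on ℝ^d. -/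

import Mathlib

open Metric

/-- Let `g` be continuously differentiable on `B(0,R)` with gradient `s`
satisfying `⟨s(y) − s(x), x − y⟩ ≥ α‖x − y‖²` on the ball. Extend `g` outside the ball by
`g̃(x) = inf_{z ∈ B(0,R)} [g(z) + ⟨s(z), x − z⟩ − (α/2)‖x − z‖²]`. Then `g̃` is globally
`α`-strongly concave: `x ↦ g̃(x) + (α/2)‖x‖²` is concave on `ℝ^d`. -/
theorem strongly_concave_extension (d : ℕ) (α R : ℝ) (hα : 0 < α) (hR : 0 < R)
    (g : EuclideanSpace ℝ (Fin d) → ℝ)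
    (s : EuclideanSpace ℝ (Fin d) → EuclideanSpace ℝ (Fin d))
    (hgrad : ∀ x ∈ closedBall (0 : EuclideanSpace ℝ (Fin d)) R,
      HasGradientWithinAt g (s x) (closedBall (0 : EuclideanSpace ℝ (Fin d)) R) x)
    (hs : ContinuousOn s (closedBall (0 : EuclideanSpace ℝ (Fin d)) R))
    (hmono : ∀ x ∈ closedBall (0 : EuclideanSpace ℝ (Fin d)) R,
      ∀ y ∈ closedBall (0 : EuclideanSpace ℝ (Fin d)) R,
        α * ‖x - y‖ ^ 2 ≤ (inner ℝ (s y - s x) (x - y) : ℝ))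
    (gt : EuclideanSpace ℝ (Fin d) → ℝ)
    (hgt : ∀ x, gt x =
      if ‖x‖ ≤ R then g x
      else ⨅ z : closedBall (0 : EuclideanSpace ℝ (Fin d)) R,
        (g ↑z + (inner ℝ (s ↑z) (x - ↑z) : ℝ) - α / 2 * ‖x - ↑z‖ ^ 2)) :
    ConcaveOn ℝ Set.univ fun x => gt x + α / 2 * ‖x‖ ^ 2 := by
  set K : Set (EuclideanSpace ℝ (Fin d)) := closedBall 0 R with hK
  set L : EuclideanSpace ℝ (Fin d) → EuclideanSpace ℝ (Fin d) → ℝ :=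
    fun z x => g z + (inner ℝ (s z) (x - z) : ℝ) - α / 2 * ‖x - z‖ ^ 2 with hL
  -- continuity of g on K
  have hcg : ContinuousOn g K := fun x hx =>
    (hgrad x hx).hasFDerivWithinAt.continuousWithinAt
  -- key concavity inequality on the ball
  have key : ∀ x ∈ K, ∀ z ∈ K, g x ≤ L z x := by
    intro x hx z hz
    set u : EuclideanSpace ℝ (Fin d) := x - z with hu
    set p : ℝ → EuclideanSpace ℝ (Fin d) := fun t => z + t • u with hp
    have hpmem : ∀ t ∈ Set.Icc (0:ℝ) 1, p t ∈ K := by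
      intro t ht
      have : p t = (1 - t) • z + t • x := by
        simp only [hp, hu]; module
      rw [this]
      exact (convex_closedBall (0 : EuclideanSpace ℝ (Fin d)) R) hz hx (by linarith [ht.2]) ht.1 (by ring)
    have hp' : ∀ t : ℝ, HasDerivAt p u t := by
      intro t
      simpa [hp] using ((hasDerivAt_id t).smul_const u).const_add z
    set q : ℝ → ℝ := fun t => g (p t) - t * (inner ℝ (s z) u : ℝ) + α / 2 * t ^ 2 * ‖u‖ ^ 2
      with hqdef
    set q' : ℝ → ℝ := fun t =>
      (inner ℝ (s (p t)) u : ℝ) - (inner ℝ (s z) u : ℝ) + α * t * ‖u‖ ^ 2 with hq'def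
    have hq : ∀ t ∈ Set.Icc (0:ℝ) 1, HasDerivWithinAt q (q' t) (Set.Icc 0 1) t := by
      intro t ht
      have hgp : HasDerivWithinAt (fun t => g (p t)) ((inner ℝ (s (p t)) u : ℝ))
          (Set.Icc 0 1) t := by
        have hcomp := (hgrad (p t) (hpmem t ht)).hasFDerivWithinAt.comp_hasDerivWithinAt t
          ((hp' t).hasDerivWithinAt) (fun τ hτ => hpmem τ hτ)
        exact hcomp
      have h1 : HasDerivAt (fun t : ℝ => t * (inner ℝ (s z) u : ℝ)) ((inner ℝ (s z) u : ℝ)) t := by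
        simpa using (hasDerivAt_id t).mul_const ((inner ℝ (s z) u : ℝ))
      have h2 : HasDerivAt (fun t : ℝ => α / 2 * t ^ 2 * ‖u‖ ^ 2)
          (α / 2 * (2 * t) * ‖u‖ ^ 2) t := by
        simpa using ((hasDerivAt_pow 2 t).const_mul (α / 2)).mul_const (‖u‖ ^ 2)
      have := (hgp.sub h1.hasDerivWithinAt).add h2.hasDerivWithinAt
      convert this using 1
      show inner ℝ (s (p t)) u - inner ℝ (s z) u + α * t * ‖u‖ ^ 2 = _; ring
      all_goals rfl
    have hq'le : ∀ t ∈ interior (Set.Icc (0:ℝ) 1), q' t ≤ 0 := by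
      intro t ht
      rw [interior_Icc] at ht
      have htmem : p t ∈ K := hpmem t ⟨ht.1.le, ht.2.le⟩
      have hm := hmono (p t) htmem z hz
      have hpz : p t - z = t • u := by simp [hp]
      rw [hpz] at hm
      rw [norm_smul, Real.norm_eq_abs] at hm
      rw [real_inner_smul_right] at hm
      have hin : (inner ℝ (s z - s (p t)) u : ℝ)
          = (inner ℝ (s z) u : ℝ) - (inner ℝ (s (p t)) u : ℝ) := inner_sub_left _ _ _
      rw [hin] at hm
      have habs : |t| = t := abs_of_pos ht.1
      rw [habs] at hm
      have ht0 : 0 < t := ht.1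
      simp only [hq'def]
      nlinarith [hm, ht0]
    have hanti : AntitoneOn q (Set.Icc 0 1) := by
      refine antitoneOn_of_hasDerivWithinAt_nonpos (convex_Icc 0 1)
        (fun t ht => (hq t ht).continuousWithinAt) (fun t ht => ?_) hq'le
      exact (hq t (interior_subset ht)).mono interior_subset
    have hq10 : q 1 ≤ q 0 := hanti (Set.left_mem_Icc.2 zero_le_one)
      (Set.right_mem_Icc.2 zero_le_one) zero_le_one
    have hq0 : q 0 = g z := by simp [hqdef, hp]
    have hq1 : q 1 = g x - (inner ℝ (s z) u : ℝ) + α / 2 * ‖u‖ ^ 2 := by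
      have : p 1 = x := by simp [hp, hu]
      simp [hqdef, this]
    rw [hq0, hq1] at hq10
    simp only [hL, hu]
    linarith
  -- boundedness below of the family
  have h0K : (0 : EuclideanSpace ℝ (Fin d)) ∈ K := mem_closedBall_self hR.le
  haveI : Nonempty K := ⟨⟨0, h0K⟩⟩
  have hLcont : ∀ x : EuclideanSpace ℝ (Fin d), ContinuousOn (fun z => L z x) K := by
    intro x
    apply ContinuousOn.sub
    · apply hcg.add
      exact hs.inner ((continuous_const.sub continuous_id).continuousOn)
    · exact continuousOn_const.mul
        (((continuousOn_const.sub continuousOn_id).norm).pow 2)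
  have hbdd : ∀ x : EuclideanSpace ℝ (Fin d), BddBelow (Set.range fun z : K => L (↑z) x) := by
    intro x
    have := (isCompact_closedBall (0 : EuclideanSpace ℝ (Fin d)) R).bddBelow_image (hLcont x)
    rwa [Set.image_eq_range] at this
  -- gt equals the infimum everywhere
  have hglo : ∀ x : EuclideanSpace ℝ (Fin d), gt x = ⨅ z : K, L (↑z) x := by
    intro x
    rw [hgt x]
    by_cases hxR : ‖x‖ ≤ R
    · rw [if_pos hxR]
      have hxK : x ∈ K := by simpa [hK, mem_closedBall, dist_eq_norm] using hxR
      refine le_antisymm (le_ciInf fun z => key x hxK z z.2) ?_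
      have := ciInf_le (hbdd x) (⟨x, hxK⟩ : K)
      simpa [hL] using this
    · rw [if_neg hxR]
  -- affine expansion
  have expand : ∀ z x : EuclideanSpace ℝ (Fin d), L z x + α / 2 * ‖x‖ ^ 2 =
      (g z - (inner ℝ (s z) z : ℝ) - α / 2 * ‖z‖ ^ 2)
        + ((inner ℝ (s z) x : ℝ) + α * (inner ℝ z x : ℝ)) := by
    intro z x
    simp only [hL]
    rw [inner_sub_right, norm_sub_sq_real, real_inner_comm x z]
    ring
  -- prove concavity
  constructor
  · exact convex_univ
  intro x _ y _ a b ha hb hab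
  set w : EuclideanSpace ℝ (Fin d) := a • x + b • y with hw
  have hLaff : ∀ z : EuclideanSpace ℝ (Fin d), L z w + α / 2 * ‖w‖ ^ 2 =
      a * (L z x + α / 2 * ‖x‖ ^ 2) + b * (L z y + α / 2 * ‖y‖ ^ 2) := by
    intro z
    rw [expand, expand, expand]
    simp only [hw, inner_add_right, real_inner_smul_right]
    linear_combination (-(g z - (inner ℝ (s z) z : ℝ) - α / 2 * ‖z‖ ^ 2)) * hab
  have hmain : ∀ z : K,
      a * (gt x + α / 2 * ‖x‖ ^ 2) + b * (gt y + α / 2 * ‖y‖ ^ 2)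
        ≤ L (↑z) w + α / 2 * ‖w‖ ^ 2 := by
    intro z
    have h1 : gt x ≤ L (↑z) x := by rw [hglo x]; exact ciInf_le (hbdd x) z
    have h2 : gt y ≤ L (↑z) y := by rw [hglo y]; exact ciInf_le (hbdd y) z
    rw [hLaff]
    have hx1 := mul_le_mul_of_nonneg_left (add_le_add_right h1 (α / 2 * ‖x‖ ^ 2)) ha
    have hy1 := mul_le_mul_of_nonneg_left (add_le_add_right h2 (α / 2 * ‖y‖ ^ 2)) hb
    linarith
  have hfinal : a * (gt x + α / 2 * ‖x‖ ^ 2) + b * (gt y + α / 2 * ‖y‖ ^ 2)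
      ≤ gt w + α / 2 * ‖w‖ ^ 2 := by
    rw [hglo w]
    have : a * (gt x + α / 2 * ‖x‖ ^ 2) + b * (gt y + α / 2 * ‖y‖ ^ 2)
        - α / 2 * ‖w‖ ^ 2 ≤ ⨅ z : K, L (↑z) w :=
      le_ciInf fun z => by linarith [hmain z]
    linarith
  simpa [smul_eq_mul] using hfinal
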